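/- Let ε > 0, Δt > 0, σ_s ≥ 0, σ_a ≥ 0, σ_t = σ_s + ε²σ_a > 0, h > 0, φ ≥ 0, and d² ∈ [−4/h², 0]. If Δt ≤ 1/σ_a (vacuously if σ_a = 0), Δt ≤ max{εh/2, h²σ_t/4}, and φ ≤ hσ_t/(2ε³) when hσ_t ≤ 2ε while φ ≤ 1/ε² otherwise, then det(G) := (ε²/(ε² + σ_s Δt)) · ((1 − σ_a Δt)² − φ d² Δt²) satisfies det(G) ≤ 1. -/
import Mathlib


/-- Determinant bound in the von Neumann stability analysis:
under the CFL condition and the bound on the relaxation parameter φ,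
`det(G) = (ε²/(ε² + σ_s Δt))·((1 − σ_a Δt)² − φ d² Δt²) ≤ 1`. -/
theorem stmt1 (ε Δt σs σa σt h φ dsq : ℝ)
    (hε : 0 < ε) (hΔt : 0 < Δt) (hσs : 0 ≤ σs) (hσa : 0 ≤ σa)
    (hσt : σt = σs + ε ^ 2 * σa) (hσtpos : 0 < σt)
    (hh : 0 < h) (hφ : 0 ≤ φ)
    (hdsq1 : -(4 / h ^ 2) ≤ dsq) (hdsq2 : dsq ≤ 0)
    (hCFL1 : σa * Δt ≤ 1)
    (hCFL2 : Δt ≤ max (ε * h / 2) (h ^ 2 * σt / 4))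
    (hφbd : if h * σt ≤ 2 * ε then φ ≤ h * σt / (2 * ε ^ 3) else φ ≤ 1 / ε ^ 2) :
    ε ^ 2 / (ε ^ 2 + σs * Δt) * ((1 - σa * Δt) ^ 2 - φ * dsq * Δt ^ 2) ≤ 1 := by
  have hden : 0 < ε ^ 2 + σs * Δt := by positivity
  have hd' : (-dsq) * h ^ 2 ≤ 4 := by
    have h2 : (0:ℝ) < h ^ 2 := by positivity
    have := (le_div_iff₀ h2).mp (by linarith : -dsq ≤ 4 / h ^ 2)
    linarith
  have hkey : ε ^ 2 * (φ * (-dsq) * Δt ^ 2) ≤ σt * Δt := by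
    -- first: ε ^ 2 * φ * 4 * Δt ^ 2 ≤ σt * Δt * h ^ 2
    have hmain : ε ^ 2 * φ * 4 * Δt ^ 2 ≤ σt * Δt * h ^ 2 := by
      by_cases hc : h * σt ≤ 2 * ε
      · rw [if_pos hc] at hφbd
        have hφ' : φ * (2 * ε ^ 3) ≤ h * σt :=
          (le_div_iff₀ (by positivity)).mp hφbd
        have hmax : max (ε * h / 2) (h ^ 2 * σt / 4) = ε * h / 2 := by
          apply max_eq_left; nlinarith
        rw [hmax] at hCFL2
        nlinarith [mul_nonneg hφ hΔt.le, mul_pos hΔt hσtpos,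
          mul_nonneg (mul_nonneg hφ hΔt.le) hΔt.le,
          mul_le_mul_of_nonneg_right hCFL2 (mul_pos hΔt hσtpos).le,
          mul_le_mul_of_nonneg_right hφ' (mul_nonneg hΔt.le hΔt.le)]
      · rw [if_neg hc] at hφbd
        have hφ' : φ * ε ^ 2 ≤ 1 := by
          have := (le_div_iff₀ (by positivity : (0:ℝ) < ε ^ 2)).mp hφbd
          linarith
        have hmax : max (ε * h / 2) (h ^ 2 * σt / 4) = h ^ 2 * σt / 4 := by
          apply max_eq_right; nlinarith
        rw [hmax] at hCFL2
        nlinarith [mul_le_mul_of_nonneg_right hCFL2 hΔt.le,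
          mul_le_mul_of_nonneg_right hφ' (mul_nonneg hΔt.le hΔt.le)]
    have h2 : (0:ℝ) < h ^ 2 := by positivity
    nlinarith [mul_le_mul_of_nonneg_left hd' (by positivity : (0:ℝ) ≤ ε ^ 2 * φ * Δt ^ 2)]
  rw [div_mul_eq_mul_div, div_le_one hden]
  have hsq : (1 - σa * Δt) ^ 2 ≤ 1 - σa * Δt := by nlinarith [mul_nonneg hσa hΔt.le]
  nlinarith [hkey, sq_nonneg ε, mul_nonneg hσa hΔt.le,
    mul_nonneg (sq_nonneg ε) (mul_nonneg hσa hΔt.le)]
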